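/- Let S be a finite set of pairwise distinct lines in ℝ³ such that the distance between any two distinct lines of S is exactly 2, and suppose S contains two distinct parallel lines. Then S has at most 4 elements. (If two of the mutually touching unit cylinders are parallel, then the maximum number of mutually touching cylinders is four.) -/

import Mathlib

noncomputable section

/-- The point/vector `(a, b, c)` in ℝ³ (Euclidean space). -/
def vec3 (a b c : ℝ) : EuclideanSpace ℝ (Fin 3) :=
  (WithLp.equiv 2 (Fin 3 → ℝ)).symm ![a, b, c]

/-- The line in ℝ³ through the point `P` with direction vector `w`:
the set `{P + s • w : s ∈ ℝ}`. -/
def lineThrough (P w : EuclideanSpace ℝ (Fin 3)) : Set (EuclideanSpace ℝ (Fin 3)) :=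
  Set.range fun s : ℝ => P + s • w

/-- `ℓ` is a line in ℝ³: a one-dimensional affine subspace, i.e. a set of the form
`{P + s • w : s ∈ ℝ}` for some point `P` and nonzero direction vector `w`. -/
def IsLine (ℓ : Set (EuclideanSpace ℝ (Fin 3))) : Prop :=
  ∃ P w : EuclideanSpace ℝ (Fin 3), w ≠ 0 ∧ ℓ = lineThrough P w

/-- The distance between two sets in ℝ³: the infimum of the Euclidean distances
between points of `s` and points of `t`. -/
def setDist (s t : Set (EuclideanSpace ℝ (Fin 3))) : ℝ :=
  sInf (Set.image2 dist s t)

local notation "E3" => EuclideanSpace ℝ (Fin 3)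
local notation "⟬" x ", " y "⟭" => (inner ℝ x y : ℝ)

namespace CylAux

lemma setDist_lineThrough_le (P w Q v : E3) (s t : ℝ) :
    setDist (lineThrough P w) (lineThrough Q v) ≤ ‖(P + s • w) - (Q + t • v)‖ := by
  apply csInf_le
  · exact ⟨0, by rintro x ⟨a, ha, b, hb, rfl⟩; exact dist_nonneg⟩
  · exact ⟨P + s • w, ⟨s, rfl⟩, Q + t • v, ⟨t, rfl⟩, dist_eq_norm _ _⟩

lemma le_setDist_lineThrough {P w Q v : E3} {c : ℝ}
    (h : ∀ s t : ℝ, c ≤ ‖(P + s • w) - (Q + t • v)‖) :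
    c ≤ setDist (lineThrough P w) (lineThrough Q v) := by
  apply le_csInf
  · exact ⟨dist (P + (0:ℝ) • w) (Q + (0:ℝ) • v), P + (0:ℝ) • w, ⟨0, rfl⟩,
      Q + (0:ℝ) • v, ⟨0, rfl⟩, rfl⟩
  · rintro x ⟨a, ⟨s, rfl⟩, b, ⟨t, rfl⟩, rfl⟩
    rw [dist_eq_norm]; exact h s t

lemma lineThrough_smul {P w : E3} {a : ℝ} (ha : a ≠ 0) :
    lineThrough P (a • w) = lineThrough P w := by
  ext x
  constructor
  · rintro ⟨s, rfl⟩; exact ⟨s * a, by simp [smul_smul]⟩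
  · rintro ⟨s, rfl⟩; exact ⟨s / a, by simp [smul_smul, div_mul_cancel₀ _ ha]⟩

lemma vectorSpan_lineThrough (P w : E3) :
    vectorSpan ℝ (lineThrough P w) = Submodule.span ℝ {w} := by
  apply le_antisymm
  · rw [vectorSpan_def, Submodule.span_le]
    rintro x ⟨a, ⟨s, rfl⟩, b, ⟨t, rfl⟩, rfl⟩
    show (P + s • w) -ᵥ (P + t • w) ∈ _
    have h : (P + s • w) -ᵥ (P + t • w) = (s - t) • w := by
      simp [vsub_eq_sub, sub_smul]
    rw [h]
    exact Submodule.smul_mem _ _ (Submodule.mem_span_singleton_self w)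
  · rw [Submodule.span_le, Set.singleton_subset_iff]
    have h1 : P + (1:ℝ) • w ∈ lineThrough P w := ⟨1, rfl⟩
    have h0 : P + (0:ℝ) • w ∈ lineThrough P w := ⟨0, rfl⟩
    have := vsub_mem_vectorSpan ℝ h1 h0
    simpa [vsub_eq_sub] using this

lemma indep_of_not_mem_span {w v : E3} (hw : w ≠ 0)
    (hv : v ∉ Submodule.span ℝ ({w} : Set E3)) : LinearIndependent ℝ ![w, v] := by
  rw [LinearIndependent.pair_iff]
  intro s t hst
  by_cases ht : t = 0
  · subst ht
    simp only [smul_zero, zero_smul, add_zero] at hst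
    rcases smul_eq_zero.mp hst with h | h
    · exact ⟨h, rfl⟩
    · exact absurd h hw
  · exfalso
    apply hv
    rw [Submodule.mem_span_singleton]
    refine ⟨-s / t, ?_⟩
    have : v = (-s / t) • w ↔ t • v = t • ((-s / t) • w) := by
      constructor
      · intro h; rw [h]
      · intro h; exact smul_right_injective _ ht h
    rw [eq_comm, this, smul_smul, mul_div_cancel₀ _ ht]
    have : t • v = -(s • w) := by
      rw [eq_neg_iff_add_eq_zero, add_comm]; exact hst
    rw [this, neg_smul]

lemma indep_of_orthogonal {x y : E3} (hx : x ≠ 0) (hy : y ≠ 0)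
    (hxy : ⟬x, y⟭ = 0) : LinearIndependent ℝ ![x, y] := by
  apply indep_of_not_mem_span hx
  intro hmem
  obtain ⟨a, ha⟩ := Submodule.mem_span_singleton.mp hmem
  have : ⟬x, y⟭ = a * ⟬x, x⟭ := by rw [← ha, real_inner_smul_right]
  rw [hxy] at this
  have hxx : ⟬x, x⟭ ≠ 0 := by
    rw [real_inner_self_eq_norm_sq]
    exact pow_ne_zero 2 (norm_ne_zero_iff.mpr hx)
  have ha0 : a = 0 := by
    rcases mul_eq_zero.mp this.symm with h | h
    · exact h
    · exact absurd h hxx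
  rw [ha0, zero_smul] at ha
  exact hy ha.symm

lemma exists_unit_normal {w v : E3} (h : LinearIndependent ℝ ![w, v]) :
    ∃ n : E3, ‖n‖ = 1 ∧ ⟬n, w⟭ = 0 ∧ ⟬n, v⟭ = 0 := by
  set K : Submodule ℝ E3 := Submodule.span ℝ {w, v} with hKdef
  have hK : Module.finrank ℝ K = 2 := by
    have h2 := finrank_span_eq_card h
    have hr : Set.range ![w, v] = {w, v} := by
      ext x; simp [Matrix.range_cons, Matrix.range_empty, or_comm]
    rw [hr] at h2
    simpa using h2
  have horth : Module.finrank ℝ Kᗮ = 1 := by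
    have h3 := Submodule.finrank_add_finrank_orthogonal K
    rw [hK, finrank_euclideanSpace_fin] at h3
    omega
  have hbot : Kᗮ ≠ ⊥ := by
    intro hbot
    rw [hbot] at horth
    simp at horth
  obtain ⟨n, hnK, hn0⟩ := Submodule.exists_mem_ne_zero_of_ne_bot hbot
  refine ⟨‖n‖⁻¹ • n, ?_, ?_, ?_⟩
  · simp [norm_smul, inv_mul_cancel₀ (norm_ne_zero_iff.mpr hn0)]
  · have := hnK w (Submodule.subset_span (by simp))
    rw [real_inner_smul_left, real_inner_comm, this, mul_zero]
  · have := hnK v (Submodule.subset_span (by simp))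
    rw [real_inner_smul_left, real_inner_comm, this, mul_zero]

/-- distance between parallel lines -/
lemma setDist_parallel {w : E3} (hw : w ≠ 0) (P Q : E3) :
    setDist (lineThrough P w) (lineThrough Q w)
      = ‖(P - Q) - (⟬P - Q, w⟭ / ⟬w, w⟭) • w‖ := by
  set x := P - Q with hx
  set pr := x - (⟬x, w⟭ / ⟬w, w⟭) • w with hpr
  have hww : ⟬w, w⟭ ≠ 0 := by
    rw [real_inner_self_eq_norm_sq]
    exact pow_ne_zero 2 (norm_ne_zero_iff.mpr hw)
  have hprw : ⟬pr, w⟭ = 0 := by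
    rw [hpr]
    rw [inner_sub_left, real_inner_smul_left, div_mul_cancel₀ _ hww, sub_self]
  apply le_antisymm
  · have := setDist_lineThrough_le P w Q w (-(⟬x, w⟭ / ⟬w, w⟭)) 0
    calc setDist (lineThrough P w) (lineThrough Q w) ≤ _ := this
      _ = ‖pr‖ := by congr 1; rw [hpr, hx]; module
  · apply le_setDist_lineThrough
    intro s t
    have hdecomp : (P + s • w) - (Q + t • w) = pr + (⟬x, w⟭ / ⟬w, w⟭ + s - t) • w := by
      rw [hpr, hx]; module
    rw [hdecomp]
    have hnorm : ‖pr + (⟬x, w⟭ / ⟬w, w⟭ + s - t) • w‖ ^ 2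
        = ‖pr‖ ^ 2 + ‖(⟬x, w⟭ / ⟬w, w⟭ + s - t) • w‖ ^ 2 := by
      rw [norm_add_sq_real, real_inner_smul_right, hprw]
      ring
    nlinarith [norm_nonneg (pr + (⟬x, w⟭ / ⟬w, w⟭ + s - t) • w), norm_nonneg pr,
      sq_nonneg ‖(⟬x, w⟭ / ⟬w, w⟭ + s - t) • w‖]

/-- distance between non-parallel lines, via a unit common normal -/
lemma setDist_skew {w v n : E3} (h : LinearIndependent ℝ ![w, v])
    (hn : ‖n‖ = 1) (hnw : ⟬n, w⟭ = 0) (hnv : ⟬n, v⟭ = 0) (P Q : E3) :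
    setDist (lineThrough P w) (lineThrough Q v) = |⟬P - Q, n⟭| := by
  set x := P - Q with hx
  have hn0 : n ≠ 0 := by intro h0; rw [h0] at hn; simp at hn
  apply le_antisymm
  · have hspan : Submodule.span ℝ {w, v} = (Submodule.span ℝ {n})ᗮ := by
      apply Submodule.eq_of_le_of_finrank_le
      · rw [Submodule.span_le]
        rintro z hz
        rcases hz with rfl | hz
        · exact Submodule.mem_orthogonal_singleton_iff_inner_right.mpr hnw
        · rcases hz with rfl
          exact Submodule.mem_orthogonal_singleton_iff_inner_right.mpr hnv
      · have h1 : Module.finrank ℝ (Submodule.span ℝ {n}) = 1 := finrank_span_singleton hn0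
        have h2 := Submodule.finrank_add_finrank_orthogonal (Submodule.span ℝ ({n} : Set E3))
        rw [h1, finrank_euclideanSpace_fin] at h2
        have h4 : Module.finrank ℝ (Submodule.span ℝ ({w, v} : Set E3)) = 2 := by
          have h5 := finrank_span_eq_card h
          have hr : Set.range ![w, v] = {w, v} := by
            ext z; simp [Matrix.range_cons, Matrix.range_empty, or_comm]
          rw [hr] at h5
          simpa using h5
        omega
    have hmem : x - ⟬x, n⟭ • n ∈ (Submodule.span ℝ ({n} : Set E3))ᗮ := by
      apply Submodule.mem_orthogonal_singleton_iff_inner_right.mpr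
      rw [inner_sub_right, real_inner_smul_right, real_inner_self_eq_norm_sq, hn,
        real_inner_comm]
      ring
    rw [← hspan] at hmem
    obtain ⟨a, b, hab⟩ := Submodule.mem_span_pair.mp hmem
    have hkey : (P + (-a) • w) - (Q + b • v) = ⟬x, n⟭ • n := by
      have : x - (a • w + b • v) = ⟬x, n⟭ • n := by rw [hab]; module
      rw [← this, hx]; module
    calc setDist (lineThrough P w) (lineThrough Q v) ≤ _ :=
        setDist_lineThrough_le P w Q v (-a) b
      _ = ‖⟬x, n⟭ • n‖ := by rw [hkey]
      _ = |⟬x, n⟭| := by rw [norm_smul, hn]; simp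
  · apply le_setDist_lineThrough
    intro s t
    have hinner : ⟬(P + s • w) - (Q + t • v), n⟭ = ⟬x, n⟭ := by
      have hex : (P + s • w) - (Q + t • v) = x + s • w - t • v := by rw [hx]; module
      rw [hex, inner_sub_left, inner_add_left, real_inner_smul_left, real_inner_smul_left,
        real_inner_comm n w, real_inner_comm n v, hnw, hnv]
      ring
    calc |⟬x, n⟭| = |⟬(P + s • w) - (Q + t • v), n⟭| := by rw [hinner]
      _ ≤ ‖(P + s • w) - (Q + t • v)‖ * ‖n‖ := abs_real_inner_le_norm _ _
      _ = ‖(P + s • w) - (Q + t • v)‖ := by rw [hn, mul_one]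

lemma triple_decomp {a b c : E3} (ha : ‖a‖ = 1) (hb : ‖b‖ = 1) (hc : ‖c‖ = 1)
    (hab : ⟬a, b⟭ = 0) (hac : ⟬a, c⟭ = 0) (hbc : ⟬b, c⟭ = 0) (x : E3) :
    x = ⟬x, a⟭ • a + ⟬x, b⟭ • b + ⟬x, c⟭ • c := by
  have hon : Orthonormal ℝ ![a, b, c] := by
    rw [orthonormal_iff_ite]
    intro i j
    have haa : ⟬a, a⟭ = 1 := by rw [real_inner_self_eq_norm_sq, ha]; norm_num
    have hbb : ⟬b, b⟭ = 1 := by rw [real_inner_self_eq_norm_sq, hb]; norm_num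
    have hcc : ⟬c, c⟭ = 1 := by rw [real_inner_self_eq_norm_sq, hc]; norm_num
    have hba : ⟬b, a⟭ = 0 := by rw [real_inner_comm]; exact hab
    have hca : ⟬c, a⟭ = 0 := by rw [real_inner_comm]; exact hac
    have hcb : ⟬c, b⟭ = 0 := by rw [real_inner_comm]; exact hbc
    fin_cases i <;> fin_cases j <;>
      simp_all [Matrix.cons_val_zero, Matrix.cons_val_one]
  have hsp : ⊤ ≤ Submodule.span ℝ (Set.range ![a, b, c]) := by
    rw [hon.linearIndependent.span_eq_top_of_card_eq_finrank
      (by simp [finrank_euclideanSpace_fin])]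
  let onb := OrthonormalBasis.mk hon hsp
  have h := onb.sum_repr x
  rw [Fin.sum_univ_three] at h
  have h0 : onb.repr x 0 • onb 0 = ⟬x, a⟭ • a := by
    rw [OrthonormalBasis.repr_apply_apply, OrthonormalBasis.coe_mk, real_inner_comm]
    congr 1
  have h1 : onb.repr x 1 • onb 1 = ⟬x, b⟭ • b := by
    rw [OrthonormalBasis.repr_apply_apply, OrthonormalBasis.coe_mk, real_inner_comm]
    congr 1
  have h2 : onb.repr x 2 • onb 2 = ⟬x, c⟭ • c := by
    rw [OrthonormalBasis.repr_apply_apply, OrthonormalBasis.coe_mk, real_inner_comm]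
    congr 1
  rw [h0, h1, h2] at h
  exact h.symm

lemma triple_parseval {a b c : E3} (ha : ‖a‖ = 1) (hb : ‖b‖ = 1) (hc : ‖c‖ = 1)
    (hab : ⟬a, b⟭ = 0) (hac : ⟬a, c⟭ = 0) (hbc : ⟬b, c⟭ = 0) (x : E3) :
    ‖x‖ ^ 2 = ⟬x, a⟭ ^ 2 + ⟬x, b⟭ ^ 2 + ⟬x, c⟭ ^ 2 := by
  have hd := triple_decomp ha hb hc hab hac hbc x
  have haa : ⟬a, a⟭ = 1 := by rw [real_inner_self_eq_norm_sq, ha]; norm_num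
  have hbb : ⟬b, b⟭ = 1 := by rw [real_inner_self_eq_norm_sq, hb]; norm_num
  have hcc : ⟬c, c⟭ = 1 := by rw [real_inner_self_eq_norm_sq, hc]; norm_num
  have hba : ⟬b, a⟭ = 0 := by rw [real_inner_comm]; exact hab
  have hca : ⟬c, a⟭ = 0 := by rw [real_inner_comm]; exact hac
  have hcb : ⟬c, b⟭ = 0 := by rw [real_inner_comm]; exact hbc
  rw [← real_inner_self_eq_norm_sq]
  conv_lhs => rw [hd]
  simp only [inner_add_left, inner_add_right, real_inner_smul_left, real_inner_smul_right,
    haa, hbb, hcc, hab, hac, hbc, hba, hca, hcb]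
  ring

/-- norm² of a vector orthogonal to w, in terms of a unit pair orthogonal to w -/
lemma norm_sq_perp {w b c x : E3} (hw : w ≠ 0) (hb : ‖b‖ = 1) (hc : ‖c‖ = 1)
    (hbw : ⟬b, w⟭ = 0) (hcw : ⟬c, w⟭ = 0) (hbc : ⟬b, c⟭ = 0) (hx : ⟬x, w⟭ = 0) :
    ‖x‖ ^ 2 = ⟬x, b⟭ ^ 2 + ⟬x, c⟭ ^ 2 := by
  set u : E3 := ‖w‖⁻¹ • w with hu
  have hwn : ‖w‖ ≠ 0 := norm_ne_zero_iff.mpr hw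
  have hu1 : ‖u‖ = 1 := by
    rw [hu, norm_smul]
    simp [inv_mul_cancel₀ hwn]
  have hub : ⟬u, b⟭ = 0 := by
    rw [hu, real_inner_smul_left, real_inner_comm, hbw, mul_zero]
  have huc : ⟬u, c⟭ = 0 := by
    rw [hu, real_inner_smul_left, real_inner_comm, hcw, mul_zero]
  have hxu : ⟬x, u⟭ = 0 := by
    rw [hu, real_inner_smul_right, hx, mul_zero]
  have := triple_parseval hu1 hb hc hub huc hbc x
  rw [hxu] at this
  rw [this]; ring

/-- decomposition of a vector orthogonal to w, in terms of a unit pair orthogonal to w -/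
lemma decomp_perp {w b c x : E3} (hw : w ≠ 0) (hb : ‖b‖ = 1) (hc : ‖c‖ = 1)
    (hbw : ⟬b, w⟭ = 0) (hcw : ⟬c, w⟭ = 0) (hbc : ⟬b, c⟭ = 0) (hx : ⟬x, w⟭ = 0) :
    x = ⟬x, b⟭ • b + ⟬x, c⟭ • c := by
  set u : E3 := ‖w‖⁻¹ • w with hu
  have hwn : ‖w‖ ≠ 0 := norm_ne_zero_iff.mpr hw
  have hu1 : ‖u‖ = 1 := by
    rw [hu, norm_smul]
    simp [inv_mul_cancel₀ hwn]
  have hub : ⟬u, b⟭ = 0 := by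
    rw [hu, real_inner_smul_left, real_inner_comm, hbw, mul_zero]
  have huc : ⟬u, c⟭ = 0 := by
    rw [hu, real_inner_smul_left, real_inner_comm, hcw, mul_zero]
  have hxu : ⟬x, u⟭ = 0 := by
    rw [hu, real_inner_smul_right, hx, mul_zero]
  have := triple_decomp hu1 hb hc hub huc hbc x
  rw [hxu, zero_smul, zero_add] at this
  exact this

lemma perp_inner_other {w t : E3} (hwt : ⟬w, t⟭ = 0) (y : E3) :
    ⟬y - (⟬y, w⟭ / ⟬w, w⟭) • w, t⟭ = ⟬y, t⟭ := by
  rw [inner_sub_left, real_inner_smul_left, hwt, mul_zero, sub_zero]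

lemma perp_inner_self {w : E3} (hww : ⟬w, w⟭ ≠ 0) (y : E3) :
    ⟬y - (⟬y, w⟭ / ⟬w, w⟭) • w, w⟭ = 0 := by
  rw [inner_sub_left, real_inner_smul_left, div_mul_cancel₀ _ hww, sub_self]

end CylAux
namespace CylAux

lemma inner_sub_split (A B C t : E3) : ⟬A - B, t⟭ = ⟬A - C, t⟭ - ⟬B - C, t⟭ := by
  simp only [inner_sub_left]; ring

lemma sq_eq_four' {x : ℝ} (h : x ^ 2 = 4) : x = 2 ∨ x = -2 := by
  have hf : (x - 2) * (x + 2) = 0 := by linear_combination h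
  rcases mul_eq_zero.mp hf with h' | h'
  · left; linarith
  · right; linarith

end CylAux

open CylAux

set_option maxHeartbeats 1000000

/-- If a finite family of pairwise distinct lines in ℝ³ has all pairwise distances
equal to 2 and contains two distinct parallel lines, then it has at most 4 members:
if two of the mutually touching unit cylinders are parallel, the maximum number of
mutually touching cylinders is four. -/
theorem card_le_four_of_parallel_pair
    (S : Finset (Set (EuclideanSpace ℝ (Fin 3))))
    (hline : ∀ ℓ ∈ S, IsLine ℓ)
    (hdist : ∀ ℓ ∈ S, ∀ m ∈ S, ℓ ≠ m → setDist ℓ m = 2)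
    (hpar : ∃ ℓ ∈ S, ∃ m ∈ S, ℓ ≠ m ∧ vectorSpan ℝ ℓ = vectorSpan ℝ m) :
    S.card ≤ 4 := by
  classical
  obtain ⟨ℓ₁, hS1, ℓ₂, hS2, hne12, hvs⟩ := hpar
  obtain ⟨P₁, w, hw0, hℓ₁⟩ := hline ℓ₁ hS1
  obtain ⟨P₂, w₂, hw₂0, hℓ₂⟩ := hline ℓ₂ hS2
  have hww : ⟬w, w⟭ ≠ 0 := by
    rw [real_inner_self_eq_norm_sq]
    exact pow_ne_zero 2 (norm_ne_zero_iff.mpr hw0)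
  -- ℓ₂ has the same direction w
  have hspan : Submodule.span ℝ ({w} : Set E3) = Submodule.span ℝ ({w₂} : Set E3) := by
    have h := hvs
    rw [hℓ₁, hℓ₂, vectorSpan_lineThrough, vectorSpan_lineThrough] at h
    exact h
  have hw₂mem : w₂ ∈ Submodule.span ℝ ({w} : Set E3) := by
    rw [hspan]; exact Submodule.mem_span_singleton_self w₂
  obtain ⟨a, ha⟩ := Submodule.mem_span_singleton.mp hw₂mem
  have ha0 : a ≠ 0 := by
    rintro rfl
    rw [zero_smul] at ha
    exact hw₂0 ha.symm
  have hℓ₂' : ℓ₂ = lineThrough P₂ w := by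
    rw [hℓ₂, ← ha, lineThrough_smul ha0]
  -- the perpendicular offset d between the two parallel lines
  set d : E3 := (P₂ - P₁) - (⟬P₂ - P₁, w⟭ / ⟬w, w⟭) • w with hd_def
  have hdn : ‖d‖ = 2 := by
    have h2 := hdist ℓ₂ hS2 ℓ₁ hS1 (Ne.symm hne12)
    rw [hℓ₂', hℓ₁, setDist_parallel hw0] at h2
    exact h2
  have hdw : ⟬d, w⟭ = 0 := perp_inner_self hww (P₂ - P₁)
  have hd0 : d ≠ 0 := by
    intro h
    rw [h, norm_zero] at hdn
    norm_num at hdn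
  have hwd_ind : LinearIndependent ℝ ![w, d] :=
    indep_of_orthogonal hw0 hd0 (by rw [real_inner_comm]; exact hdw)
  obtain ⟨n₀, hn₀1, hn₀w, hn₀d⟩ := exists_unit_normal hwd_ind
  have hn₀0 : n₀ ≠ 0 := by
    intro h; rw [h, norm_zero] at hn₀1; norm_num at hn₀1
  set d' : E3 := (2:ℝ)⁻¹ • d with hd'_def
  have hd'1 : ‖d'‖ = 1 := by
    rw [hd'_def, norm_smul, hdn]
    norm_num
  have hd'w : ⟬d', w⟭ = 0 := by
    rw [hd'_def, real_inner_smul_left, hdw, mul_zero]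
  have hn₀d' : ⟬n₀, d'⟭ = 0 := by
    rw [hd'_def, real_inner_smul_right, hn₀d, mul_zero]
  have hd'n₀ : ⟬d', n₀⟭ = 0 := by rw [real_inner_comm]; exact hn₀d'
  have hwd' : ⟬w, d'⟭ = 0 := by rw [real_inner_comm]; exact hd'w
  have hwn₀ : ⟬w, n₀⟭ = 0 := by rw [real_inner_comm]; exact hn₀w
  -- coordinates of P₂ - P₁
  have hP21d' : ⟬P₂ - P₁, d'⟭ = 2 := by
    have h1 : ⟬d, d'⟭ = ⟬P₂ - P₁, d'⟭ := by
      rw [hd_def]; exact perp_inner_other hwd' (P₂ - P₁)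
    have h2 : ⟬d, d'⟭ = 2 := by
      rw [hd'_def, real_inner_smul_right, real_inner_self_eq_norm_sq, hdn]
      norm_num
    rw [← h1, h2]
  have hP21n₀ : ⟬P₂ - P₁, n₀⟭ = 0 := by
    have h1 : ⟬d, n₀⟭ = ⟬P₂ - P₁, n₀⟭ := by
      rw [hd_def]; exact perp_inner_other hwn₀ (P₂ - P₁)
    rw [← h1, real_inner_comm]; exact hn₀d
  -- classification of the remaining lines
  have hclass : ∀ m ∈ S, m ≠ ℓ₁ → m ≠ ℓ₂ →
      (∃ Q : E3, m = lineThrough Q w ∧ ⟬Q - P₁, d'⟭ = 1 ∧ ⟬Q - P₁, n₀⟭ ^ 2 = 3) ∨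
      (∃ Q v : E3, m = lineThrough Q v ∧ v ≠ 0 ∧ LinearIndependent ℝ ![w, v] ∧
        ⟬n₀, v⟭ = 0 ∧ ⟬Q - P₁, n₀⟭ ^ 2 = 4) := by
    intro m hmS hm1 hm2
    obtain ⟨Q, v, hv0, hmEq⟩ := hline m hmS
    by_cases hvw : v ∈ Submodule.span ℝ ({w} : Set E3)
    · -- parallel case
      left
      obtain ⟨b, hb⟩ := Submodule.mem_span_singleton.mp hvw
      have hb0 : b ≠ 0 := by
        rintro rfl
        rw [zero_smul] at hb
        exact hv0 hb.symm
      have hmEq' : m = lineThrough Q w := by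
        rw [hmEq, ← hb, lineThrough_smul hb0]
      refine ⟨Q, hmEq', ?_⟩
      have e1 := hdist m hmS ℓ₁ hS1 hm1
      rw [hmEq', hℓ₁, setDist_parallel hw0] at e1
      have e2 := hdist m hmS ℓ₂ hS2 hm2
      rw [hmEq', hℓ₂', setDist_parallel hw0] at e2
      have hc1 : ‖(Q - P₁) - (⟬Q - P₁, w⟭ / ⟬w, w⟭) • w‖ ^ 2 = 4 := by
        rw [e1]; norm_num
      have hc2 : ‖(Q - P₂) - (⟬Q - P₂, w⟭ / ⟬w, w⟭) • w‖ ^ 2 = 4 := by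
        rw [e2]; norm_num
      have F1 : ⟬Q - P₁, d'⟭ ^ 2 + ⟬Q - P₁, n₀⟭ ^ 2 = 4 := by
        have h := norm_sq_perp hw0 hd'1 hn₀1 hd'w hn₀w hd'n₀
          (perp_inner_self hww (Q - P₁))
        rw [perp_inner_other hwd', perp_inner_other hwn₀] at h
        rw [← h]; exact hc1
      have F2 : ⟬Q - P₂, d'⟭ ^ 2 + ⟬Q - P₂, n₀⟭ ^ 2 = 4 := by
        have h := norm_sq_perp hw0 hd'1 hn₀1 hd'w hn₀w hd'n₀
          (perp_inner_self hww (Q - P₂))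
        rw [perp_inner_other hwd', perp_inner_other hwn₀] at h
        rw [← h]; exact hc2
      rw [show ⟬Q - P₂, d'⟭ = ⟬Q - P₁, d'⟭ - 2 by
            rw [inner_sub_split Q P₂ P₁ d', hP21d'],
          show ⟬Q - P₂, n₀⟭ = ⟬Q - P₁, n₀⟭ by
            rw [inner_sub_split Q P₂ P₁ n₀, hP21n₀, sub_zero]] at F2
      have hX : ⟬Q - P₁, d'⟭ = 1 := by linear_combination (F1 - F2) / 4
      exact ⟨hX, by linear_combination F1 - (⟬Q - P₁, d'⟭ + 1) * hX⟩
    · -- non-parallel case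
      right
      have hind : LinearIndependent ℝ ![w, v] := indep_of_not_mem_span hw0 hvw
      obtain ⟨n, hn1, hnw, hnv⟩ := exists_unit_normal hind
      have e1 := hdist ℓ₁ hS1 m hmS (Ne.symm hm1)
      rw [hℓ₁, hmEq, setDist_skew hind hn1 hnw hnv] at e1
      have e2 := hdist ℓ₂ hS2 m hmS (Ne.symm hm2)
      rw [hℓ₂', hmEq, setDist_skew hind hn1 hnw hnv] at e2
      set A : ℝ := ⟬P₁ - Q, n⟭ with hA_def
      set B : ℝ := ⟬P₂ - Q, n⟭ with hB_def
      have hA2 : A ^ 2 = 4 := by rw [← sq_abs, e1]; norm_num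
      have hB2 : B ^ 2 = 4 := by rw [← sq_abs, e2]; norm_num
      have hBA : B - A = ⟬P₂ - P₁, n⟭ := by
        rw [hA_def, hB_def, inner_sub_split P₂ P₁ Q n]
      have hdnn : ⟬d, n⟭ = ⟬P₂ - P₁, n⟭ := by
        rw [hd_def]
        exact perp_inner_other (by rw [real_inner_comm]; exact hnw) (P₂ - P₁)
      have habs : |⟬d, n⟭| ≤ 2 := by
        have := abs_real_inner_le_norm d n
        rw [hdn, hn1] at this
        linarith
      have hBAle : (B - A) ^ 2 ≤ 4 := by
        rw [hBA, ← hdnn]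
        have h' := abs_le.mp habs
        have := sq_le_sq' h'.1 h'.2
        norm_num at this
        exact this
      have h16 : (A * B) ^ 2 = 16 := by
        calc (A * B) ^ 2 = A ^ 2 * B ^ 2 := by ring
          _ = 16 := by rw [hA2, hB2]; norm_num
      have hABge : A * B ≥ 2 := by nlinarith [hBAle]
      have hfact : (A * B - 4) * (A * B + 4) = 0 := by linear_combination h16
      have hAB4 : A * B = 4 := by
        rcases mul_eq_zero.mp hfact with h' | h'
        · linarith
        · linarith
      have hBA0 : (B - A) ^ 2 = 0 := by linear_combination hA2 + hB2 - 2 * hAB4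
      have hBAeq : B = A := by
        have := pow_eq_zero_iff (n := 2) (by norm_num) |>.mp hBA0
        linarith [sub_eq_zero.mp this]
      -- n is orthogonal to d, hence n = ±n₀
      have hnd : ⟬n, d⟭ = 0 := by
        rw [real_inner_comm, hdnn, ← hBA, hBAeq, sub_self]
      have hnd' : ⟬n, d'⟭ = 0 := by
        rw [hd'_def, real_inner_smul_right, hnd, mul_zero]
      have hdecomp := decomp_perp hw0 hd'1 hn₀1 hd'w hn₀w hd'n₀ hnw
      rw [hnd', zero_smul, zero_add] at hdecomp
      set σ : ℝ := ⟬n, n₀⟭ with hσ_def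
      have hσ1 : σ ^ 2 = 1 := by
        have h := hn1
        rw [hdecomp, norm_smul, hn₀1, mul_one, Real.norm_eq_abs] at h
        rw [← sq_abs, h]; norm_num
      have hσ0 : σ ≠ 0 := by
        intro h; rw [h] at hσ1; norm_num at hσ1
      have hn₀v : ⟬n₀, v⟭ = 0 := by
        have h := hnv
        rw [hdecomp, real_inner_smul_left] at h
        rcases mul_eq_zero.mp h with h' | h'
        · exact absurd h' hσ0
        · exact h'
      refine ⟨Q, v, hmEq, hv0, hind, hn₀v, ?_⟩
      have hAσ : A = σ * ⟬P₁ - Q, n₀⟭ := by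
        rw [hA_def]
        conv_lhs => rw [hdecomp]
        rw [real_inner_smul_right]
      have h4 : σ ^ 2 * ⟬P₁ - Q, n₀⟭ ^ 2 = 4 := by
        rw [← mul_pow, ← hAσ]; exact hA2
      rw [hσ1, one_mul] at h4
      have hQP : ⟬Q - P₁, n₀⟭ = -⟬P₁ - Q, n₀⟭ := by
        rw [show Q - P₁ = -(P₁ - Q) by abel, inner_neg_left]
      rw [hQP]
      rw [neg_pow]
      simpa using h4
  -- pair contradiction: two parallel-type extra lines
  have hPP : ∀ Q₁ Q₂ : E3, lineThrough Q₁ w ∈ S → lineThrough Q₂ w ∈ S →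
      lineThrough Q₁ w ≠ lineThrough Q₂ w →
      ⟬Q₁ - P₁, d'⟭ = 1 → ⟬Q₁ - P₁, n₀⟭ ^ 2 = 3 →
      ⟬Q₂ - P₁, d'⟭ = 1 → ⟬Q₂ - P₁, n₀⟭ ^ 2 = 3 → False := by
    intro Q₁ Q₂ h1 h2 hne hd1 hn1' hd2 hn2'
    have e := hdist _ h1 _ h2 hne
    rw [setDist_parallel hw0] at e
    have hc : ‖(Q₁ - Q₂) - (⟬Q₁ - Q₂, w⟭ / ⟬w, w⟭) • w‖ ^ 2 = 4 := by rw [e]; norm_num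
    have F : ⟬Q₁ - Q₂, d'⟭ ^ 2 + ⟬Q₁ - Q₂, n₀⟭ ^ 2 = 4 := by
      have h := norm_sq_perp hw0 hd'1 hn₀1 hd'w hn₀w hd'n₀ (perp_inner_self hww (Q₁ - Q₂))
      rw [perp_inner_other hwd', perp_inner_other hwn₀] at h
      rw [← h]; exact hc
    rw [inner_sub_split Q₁ Q₂ P₁ d', inner_sub_split Q₁ Q₂ P₁ n₀, hd1, hd2] at F
    have hab : ⟬Q₁ - P₁, n₀⟭ * ⟬Q₂ - P₁, n₀⟭ = 1 := by
      linear_combination (hn1' + hn2' - F) / 2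
    have h9 : (⟬Q₁ - P₁, n₀⟭ * ⟬Q₂ - P₁, n₀⟭) ^ 2 = 9 := by
      calc (⟬Q₁ - P₁, n₀⟭ * ⟬Q₂ - P₁, n₀⟭) ^ 2
          = ⟬Q₁ - P₁, n₀⟭ ^ 2 * ⟬Q₂ - P₁, n₀⟭ ^ 2 := by ring
        _ = 9 := by rw [hn1', hn2']; norm_num
    rw [hab] at h9; norm_num at h9
  -- pair contradiction: a parallel-type and a non-parallel-type extra line
  have hPN : ∀ Q₁ Q₂ v₂ : E3, lineThrough Q₁ w ∈ S → lineThrough Q₂ v₂ ∈ S →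
      lineThrough Q₁ w ≠ lineThrough Q₂ v₂ →
      ⟬Q₁ - P₁, n₀⟭ ^ 2 = 3 → LinearIndependent ℝ ![w, v₂] → ⟬n₀, v₂⟭ = 0 →
      ⟬Q₂ - P₁, n₀⟭ ^ 2 = 4 → False := by
    intro Q₁ Q₂ v₂ h1 h2 hne hb hind hnv he
    have e := hdist _ h1 _ h2 hne
    rw [setDist_skew hind hn₀1 hn₀w hnv] at e
    have e2 : ⟬Q₁ - Q₂, n₀⟭ ^ 2 = 4 := by rw [← sq_abs, e]; norm_num
    rw [inner_sub_split Q₁ Q₂ P₁ n₀] at e2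
    have hab : ⟬Q₁ - P₁, n₀⟭ * ⟬Q₂ - P₁, n₀⟭ = 3 / 2 := by
      linear_combination (hb + he - e2) / 2
    have h9 : (⟬Q₁ - P₁, n₀⟭ * ⟬Q₂ - P₁, n₀⟭) ^ 2 = 12 := by
      calc (⟬Q₁ - P₁, n₀⟭ * ⟬Q₂ - P₁, n₀⟭) ^ 2
          = ⟬Q₁ - P₁, n₀⟭ ^ 2 * ⟬Q₂ - P₁, n₀⟭ ^ 2 := by ring
        _ = 12 := by rw [hb, he]; norm_num
    rw [hab] at h9; norm_num at h9
  -- two non-parallel-type extra lines must have parallel directions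
  have key2 : ∀ Qa va Qb vb : E3, lineThrough Qa va ∈ S → lineThrough Qb vb ∈ S →
      lineThrough Qa va ≠ lineThrough Qb vb → va ≠ 0 →
      ⟬n₀, va⟭ = 0 → ⟬n₀, vb⟭ = 0 →
      ⟬Qa - P₁, n₀⟭ ^ 2 = 4 → ⟬Qb - P₁, n₀⟭ ^ 2 = 4 →
      vb ∈ Submodule.span ℝ ({va} : Set E3) := by
    intro Qa va Qb vb ha' hb' hne hva0 hna hnb hea heb
    by_contra hmem
    have hind := indep_of_not_mem_span hva0 hmem
    have e := hdist _ ha' _ hb' hne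
    rw [setDist_skew hind hn₀1 hna hnb] at e
    have e2 : ⟬Qa - Qb, n₀⟭ ^ 2 = 4 := by rw [← sq_abs, e]; norm_num
    rw [inner_sub_split Qa Qb P₁ n₀] at e2
    have hab : ⟬Qa - P₁, n₀⟭ * ⟬Qb - P₁, n₀⟭ = 2 := by
      linear_combination (hea + heb - e2) / 2
    have h16 : (⟬Qa - P₁, n₀⟭ * ⟬Qb - P₁, n₀⟭) ^ 2 = 16 := by
      calc (⟬Qa - P₁, n₀⟭ * ⟬Qb - P₁, n₀⟭) ^ 2
          = ⟬Qa - P₁, n₀⟭ ^ 2 * ⟬Qb - P₁, n₀⟭ ^ 2 := by ring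
        _ = 16 := by rw [hea, heb]; norm_num
    rw [hab] at h16; norm_num at h16
  -- at most two extra lines
  have hE2 : ((S.erase ℓ₁).erase ℓ₂).card ≤ 2 := by
    by_contra hgt
    push_neg at hgt
    obtain ⟨T, hTsub, hT3⟩ := Finset.exists_subset_card_eq (s := (S.erase ℓ₁).erase ℓ₂) (n := 3) hgt
    rcases Finset.card_eq_three.mp hT3 with ⟨m₁, m₂, m₃, h12, h13, h23, rfl⟩
    have hmem : ∀ m ∈ ({m₁, m₂, m₃} : Finset (Set E3)), m ∈ S ∧ m ≠ ℓ₁ ∧ m ≠ ℓ₂ := by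
      intro m hm
      have h := hTsub hm
      rw [Finset.mem_erase, Finset.mem_erase] at h
      exact ⟨h.2.2, h.2.1, h.1⟩
    obtain ⟨hm₁S, hm₁1, hm₁2⟩ := hmem m₁ (by simp)
    obtain ⟨hm₂S, hm₂1, hm₂2⟩ := hmem m₂ (by simp)
    obtain ⟨hm₃S, hm₃1, hm₃2⟩ := hmem m₃ (by simp)
    rcases hclass m₁ hm₁S hm₁1 hm₁2 with ⟨Q₁, hq₁, hd₁, hn₁⟩ |
      ⟨Q₁, v₁, hq₁, hv₁0, hind₁, hnv₁, hε₁⟩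
    · rcases hclass m₂ hm₂S hm₂1 hm₂2 with ⟨Q₂, hq₂, hd₂, hn₂⟩ |
        ⟨Q₂, v₂, hq₂, hv₂0, hind₂, hnv₂, hε₂⟩
      · exact hPP Q₁ Q₂ (by rw [← hq₁]; exact hm₁S) (by rw [← hq₂]; exact hm₂S)
          (by rw [← hq₁, ← hq₂]; exact h12) hd₁ hn₁ hd₂ hn₂
      · exact hPN Q₁ Q₂ v₂ (by rw [← hq₁]; exact hm₁S) (by rw [← hq₂]; exact hm₂S)
          (by rw [← hq₁, ← hq₂]; exact h12) hn₁ hind₂ hnv₂ hε₂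
    · rcases hclass m₂ hm₂S hm₂1 hm₂2 with ⟨Q₂, hq₂, hd₂, hn₂⟩ |
        ⟨Q₂, v₂, hq₂, hv₂0, hind₂, hnv₂, hε₂⟩
      · exact hPN Q₂ Q₁ v₁ (by rw [← hq₂]; exact hm₂S) (by rw [← hq₁]; exact hm₁S)
          (by rw [← hq₂, ← hq₁]; exact h12.symm) hn₂ hind₁ hnv₁ hε₁
      · rcases hclass m₃ hm₃S hm₃1 hm₃2 with ⟨Q₃, hq₃, hd₃, hn₃⟩ |
          ⟨Q₃, v₃, hq₃, hv₃0, hind₃, hnv₃, hε₃⟩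
        · exact hPN Q₃ Q₁ v₁ (by rw [← hq₃]; exact hm₃S) (by rw [← hq₁]; exact hm₁S)
            (by rw [← hq₃, ← hq₁]; exact h13.symm) hn₃ hind₁ hnv₁ hε₁
        · -- all three non-parallel
          have hsp2 : v₂ ∈ Submodule.span ℝ ({v₁} : Set E3) :=
            key2 Q₁ v₁ Q₂ v₂ (by rw [← hq₁]; exact hm₁S) (by rw [← hq₂]; exact hm₂S)
              (by rw [← hq₁, ← hq₂]; exact h12) hv₁0 hnv₁ hnv₂ hε₁ hε₂
          have hsp3 : v₃ ∈ Submodule.span ℝ ({v₁} : Set E3) :=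
            key2 Q₁ v₁ Q₃ v₃ (by rw [← hq₁]; exact hm₁S) (by rw [← hq₃]; exact hm₃S)
              (by rw [← hq₁, ← hq₃]; exact h13) hv₁0 hnv₁ hnv₃ hε₁ hε₃
          obtain ⟨a₂, ha₂⟩ := Submodule.mem_span_singleton.mp hsp2
          have ha₂0 : a₂ ≠ 0 := by
            rintro rfl; rw [zero_smul] at ha₂; exact hv₂0 ha₂.symm
          have hq₂' : m₂ = lineThrough Q₂ v₁ := by
            rw [hq₂, ← ha₂, lineThrough_smul ha₂0]
          obtain ⟨a₃, ha₃⟩ := Submodule.mem_span_singleton.mp hsp3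
          have ha₃0 : a₃ ≠ 0 := by
            rintro rfl; rw [zero_smul] at ha₃; exact hv₃0 ha₃.symm
          have hq₃' : m₃ = lineThrough Q₃ v₁ := by
            rw [hq₃, ← ha₃, lineThrough_smul ha₃0]
          have hv₁n₀' : ⟬v₁, n₀⟭ = 0 := by rw [real_inner_comm]; exact hnv₁
          obtain ⟨t, ht1, htv₁, htn₀⟩ :=
            exists_unit_normal (indep_of_orthogonal hv₁0 hn₀0 hv₁n₀')
          have hv₁t : ⟬v₁, t⟭ = 0 := by rw [real_inner_comm]; exact htv₁
          have hn₀t : ⟬n₀, t⟭ = 0 := by rw [real_inner_comm]; exact htn₀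
          have hv₁v₁ : ⟬v₁, v₁⟭ ≠ 0 := by
            rw [real_inner_self_eq_norm_sq]
            exact pow_ne_zero 2 (norm_ne_zero_iff.mpr hv₁0)
          have key3 : ∀ Qa Qb : E3, lineThrough Qa v₁ ∈ S → lineThrough Qb v₁ ∈ S →
              lineThrough Qa v₁ ≠ lineThrough Qb v₁ →
              ⟬Qa - P₁, n₀⟭ ^ 2 = 4 → ⟬Qb - P₁, n₀⟭ ^ 2 = 4 →
              (⟬Qa - P₁, t⟭ - ⟬Qb - P₁, t⟭) ^ 2 = 4 := by
            intro Qa Qb ha' hb' hne hea heb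
            have e := hdist _ ha' _ hb' hne
            rw [setDist_parallel hv₁0] at e
            have hc : ‖(Qa - Qb) - (⟬Qa - Qb, v₁⟭ / ⟬v₁, v₁⟭) • v₁‖ ^ 2 = 4 := by
              rw [e]; norm_num
            have F : ⟬Qa - Qb, n₀⟭ ^ 2 + ⟬Qa - Qb, t⟭ ^ 2 = 4 := by
              have h := norm_sq_perp hv₁0 hn₀1 ht1 hnv₁ htv₁ hn₀t
                (perp_inner_self hv₁v₁ (Qa - Qb))
              rw [perp_inner_other hv₁n₀', perp_inner_other hv₁t] at h
              rw [← h]; exact hc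
            rw [inner_sub_split Qa Qb P₁ n₀, inner_sub_split Qa Qb P₁ t] at F
            have hab : ⟬Qa - P₁, n₀⟭ * ⟬Qb - P₁, n₀⟭
                = 2 + (⟬Qa - P₁, t⟭ - ⟬Qb - P₁, t⟭) ^ 2 / 2 := by
              linear_combination (hea + heb - F) / 2
            have h16 : (⟬Qa - P₁, n₀⟭ * ⟬Qb - P₁, n₀⟭) ^ 2 = 16 := by
              calc (⟬Qa - P₁, n₀⟭ * ⟬Qb - P₁, n₀⟭) ^ 2
                  = ⟬Qa - P₁, n₀⟭ ^ 2 * ⟬Qb - P₁, n₀⟭ ^ 2 := by ring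
                _ = 16 := by rw [hea, heb]; norm_num
            rw [hab] at h16
            have hg : ((⟬Qa - P₁, t⟭ - ⟬Qb - P₁, t⟭) ^ 2 - 4)
                * ((⟬Qa - P₁, t⟭ - ⟬Qb - P₁, t⟭) ^ 2 + 12) = 0 := by
              linear_combination 4 * h16
            rcases mul_eq_zero.mp hg with h' | h'
            · linarith
            · linarith [sq_nonneg (⟬Qa - P₁, t⟭ - ⟬Qb - P₁, t⟭)]
          have g12 := key3 Q₁ Q₂ (by rw [← hq₁]; exact hm₁S) (by rw [← hq₂']; exact hm₂S)
            (by rw [← hq₁, ← hq₂']; exact h12) hε₁ hε₂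
          have g13 := key3 Q₁ Q₃ (by rw [← hq₁]; exact hm₁S) (by rw [← hq₃']; exact hm₃S)
            (by rw [← hq₁, ← hq₃']; exact h13) hε₁ hε₃
          have g23 := key3 Q₂ Q₃ (by rw [← hq₂']; exact hm₂S) (by rw [← hq₃']; exact hm₃S)
            (by rw [← hq₂', ← hq₃']; exact h23) hε₂ hε₃
          have hpq : (⟬Q₁ - P₁, t⟭ - ⟬Q₃ - P₁, t⟭) * (⟬Q₂ - P₁, t⟭ - ⟬Q₃ - P₁, t⟭) = 2 := by
            linear_combination (g13 + g23 - g12) / 2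
          have h16 : ((⟬Q₁ - P₁, t⟭ - ⟬Q₃ - P₁, t⟭) * (⟬Q₂ - P₁, t⟭ - ⟬Q₃ - P₁, t⟭)) ^ 2
              = 16 := by
            calc ((⟬Q₁ - P₁, t⟭ - ⟬Q₃ - P₁, t⟭) * (⟬Q₂ - P₁, t⟭ - ⟬Q₃ - P₁, t⟭)) ^ 2
                = (⟬Q₁ - P₁, t⟭ - ⟬Q₃ - P₁, t⟭) ^ 2 * (⟬Q₂ - P₁, t⟭ - ⟬Q₃ - P₁, t⟭) ^ 2 := by
                  ring
              _ = 16 := by rw [g13, g23]; norm_num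
          rw [hpq] at h16; norm_num at h16
  -- conclude
  have hsub : S ⊆ insert ℓ₁ (insert ℓ₂ ((S.erase ℓ₁).erase ℓ₂)) := by
    intro m hm
    rcases eq_or_ne m ℓ₁ with rfl | h1
    · exact Finset.mem_insert_self _ _
    rcases eq_or_ne m ℓ₂ with rfl | h2
    · exact Finset.mem_insert.mpr (Or.inr (Finset.mem_insert_self _ _))
    · exact Finset.mem_insert.mpr (Or.inr (Finset.mem_insert.mpr (Or.inr
        (Finset.mem_erase.mpr ⟨h2, Finset.mem_erase.mpr ⟨h1, hm⟩⟩))))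
  have hc1 := Finset.card_le_card hsub
  have hc2 := Finset.card_insert_le ℓ₁ (insert ℓ₂ ((S.erase ℓ₁).erase ℓ₂))
  have hc3 := Finset.card_insert_le ℓ₂ ((S.erase ℓ₁).erase ℓ₂)
  omega
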